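/- In the abstract Temperley-Lieb algebra, every reduced word u_{i_1} u_{i_2} ... u_{i_k} in the generators contains its maximal index m = max{i_j} exactly once. -/

import Mathlib

/-- The defining relations of the Temperley–Lieb algebra with `m` generators
(`TL_n` for `n = m+1`): `uᵢ² = β uᵢ`, `uᵢ u_{i±1} uᵢ = uᵢ` and `uᵢ uⱼ = uⱼ uᵢ`
for `|i-j| > 1`. -/
inductive TLRel (β : ℂ) (m : ℕ) : FreeAlgebra ℂ (Fin m) → FreeAlgebra ℂ (Fin m) → Prop
  | sq (i : Fin m) :
      TLRel β m (FreeAlgebra.ι ℂ i * FreeAlgebra.ι ℂ i) (β • FreeAlgebra.ι ℂ i)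
  | absorb (i j : Fin m) (h : (i : ℕ) + 1 = (j : ℕ) ∨ (j : ℕ) + 1 = (i : ℕ)) :
      TLRel β m (FreeAlgebra.ι ℂ i * FreeAlgebra.ι ℂ j * FreeAlgebra.ι ℂ i)
        (FreeAlgebra.ι ℂ i)
  | comm (i j : Fin m) (h : (i : ℕ) + 1 < (j : ℕ) ∨ (j : ℕ) + 1 < (i : ℕ)) :
      TLRel β m (FreeAlgebra.ι ℂ i * FreeAlgebra.ι ℂ j)
        (FreeAlgebra.ι ℂ j * FreeAlgebra.ι ℂ i)

/-- The abstract Temperley–Lieb algebra with parameter `β` and `m` generators. -/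
abbrev TL (β : ℂ) (m : ℕ) : Type := RingQuot (TLRel β m)

/-- The generator `u_{i+1}` of `TL_{m+1}`. -/
noncomputable def TLgen (β : ℂ) (m : ℕ) (i : Fin m) : TL β m :=
  RingQuot.mkAlgHom ℂ (TLRel β m) (FreeAlgebra.ι ℂ i)

/-- The element of `TL` represented by a word in the generators. -/
noncomputable def wordProd (β : ℂ) (m : ℕ) (l : List (Fin m)) : TL β m :=
  (l.map (TLgen β m)).prod

lemma wordProd_append (β : ℂ) (m : ℕ) (a b : List (Fin m)) :
    wordProd β m (a ++ b) = wordProd β m a * wordProd β m b := by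
  simp [wordProd]

lemma wordProd_cons (β : ℂ) (m : ℕ) (j : Fin m) (w : List (Fin m)) :
    wordProd β m (j :: w) = TLgen β m j * wordProd β m w := by
  simp [wordProd]

lemma gen_sq (β : ℂ) (m : ℕ) (i : Fin m) :
    TLgen β m i * TLgen β m i = β • TLgen β m i := by
  have h := RingQuot.mkAlgHom_rel ℂ (TLRel.sq (β := β) (m := m) i)
  simpa only [map_mul, map_smul, TLgen] using h

lemma gen_absorb (β : ℂ) (m : ℕ) (i j : Fin m) (h : (j : ℕ) + 1 = (i : ℕ)) :
    TLgen β m i * TLgen β m j * TLgen β m i = TLgen β m i := by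
  have h2 := RingQuot.mkAlgHom_rel ℂ (TLRel.absorb (β := β) (m := m) i j (Or.inr h))
  simpa only [map_mul, TLgen] using h2

lemma gen_comm (β : ℂ) (m : ℕ) (i j : Fin m) (h : (j : ℕ) + 1 < (i : ℕ)) :
    TLgen β m i * TLgen β m j = TLgen β m j * TLgen β m i := by
  have h2 := RingQuot.mkAlgHom_rel ℂ (TLRel.comm (β := β) (m := m) i j (Or.inr h))
  simpa only [map_mul, TLgen] using h2

lemma comm_word (β : ℂ) (m : ℕ) (i : Fin m) (w : List (Fin m))
    (h : ∀ j ∈ w, (j : ℕ) + 1 < (i : ℕ)) :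
    TLgen β m i * wordProd β m w = wordProd β m w * TLgen β m i := by
  induction w with
  | nil => simp [wordProd]
  | cons j t ih =>
    rw [wordProd_cons, ← mul_assoc, gen_comm β m i j (h j (by simp)), mul_assoc,
      ih (fun x hx => h x (by simp [hx])), ← mul_assoc]

lemma first_split {α : Type*} (P : α → Prop) [DecidablePred P] :
    ∀ l : List α, (∃ x ∈ l, P x) → ∃ a q b, l = a ++ q :: b ∧ P q ∧ ∀ x ∈ a, ¬ P x := by
  intro l
  induction l with
  | nil => rintro ⟨x, hx, -⟩; simp at hx
  | cons y t ih =>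
    intro hex
    by_cases hy : P y
    · exact ⟨[], y, t, by simp, hy, by simp⟩
    · obtain ⟨x, hx, hPx⟩ := hex
      rcases List.mem_cons.mp hx with rfl | hx
      · exact absurd hPx hy
      · obtain ⟨a, q, b, heq, hq, ha⟩ := ih ⟨x, hx, hPx⟩
        exact ⟨y :: a, q, b, by simp [heq], hq, by
          intro z hz
          rcases List.mem_cons.mp hz with rfl | hz
          · exact hy
          · exact ha z hz⟩

lemma key (β : ℂ) (m : ℕ) :
    ∀ (n : ℕ) (i : Fin m) (w : List (Fin m)), w.length ≤ n →
    (∀ j ∈ w, (j : ℕ) < (i : ℕ)) →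
    ∃ (c : ℂ) (w' : List (Fin m)), w'.length < w.length + 2 ∧
      (∀ j ∈ w', (j : ℕ) ≤ (i : ℕ)) ∧
      TLgen β m i * wordProd β m w * TLgen β m i = c • wordProd β m w' := by
  intro n
  induction n with
  | zero =>
    intro i w hw _
    have : w = [] := List.length_eq_zero_iff.mp (Nat.le_zero.mp hw)
    subst this
    refine ⟨β, [i], by simp, by simp, ?_⟩
    simp [wordProd, gen_sq, smul_mul_assoc]
  | succ n ih =>
    intro i w hw hlt
    by_cases hA : ∀ j ∈ w, (j : ℕ) + 1 < (i : ℕ)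
    · -- case A: everything commutes with u_i
      refine ⟨β, w ++ [i], by simp, ?_, ?_⟩
      · intro j hj
        rcases List.mem_append.mp hj with hj | hj
        · exact le_of_lt (hlt j hj)
        · simp at hj; subst hj; exact le_refl _
      · rw [comm_word β m i w hA, mul_assoc, gen_sq, mul_smul_comm, wordProd_append]
        simp [wordProd]
    · push_neg at hA
      obtain ⟨x, hxw, hx⟩ := hA
      have hx' : (x : ℕ) + 1 = (i : ℕ) := by
        have := hlt x hxw; omega
      obtain ⟨a, q, b, rfl, hq, ha⟩ :=
        first_split (fun z : Fin m => (z : ℕ) + 1 = (i : ℕ)) _ ⟨x, hxw, hx'⟩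
      have ha' : ∀ j ∈ a, (j : ℕ) + 1 < (i : ℕ) := by
        intro j hj
        have := hlt j (by simp [hj])
        have := ha j hj
        omega
      by_cases hB : ∀ j ∈ b, (j : ℕ) + 1 < (i : ℕ)
      · -- case B1 : single occurrence of i-1
        refine ⟨1, a ++ i :: b, by simp, ?_, ?_⟩
        · intro j hj
          rcases List.mem_append.mp hj with hj | hj
          · exact le_of_lt (hlt j (by simp [hj]))
          · rcases List.mem_cons.mp hj with rfl | hj
            · exact le_refl _
            · exact le_of_lt (hlt j (by simp [hj]))
        · rw [one_smul, wordProd_append, wordProd_cons, wordProd_append, wordProd_cons]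
          simp only [← mul_assoc]
          rw [comm_word β m i a ha']
          rw [mul_assoc _ (wordProd β m b) (TLgen β m i), ← comm_word β m i b hB,
            ← mul_assoc]
          rw [mul_assoc (wordProd β m a) (TLgen β m i) (TLgen β m q),
            mul_assoc (wordProd β m a) (TLgen β m i * TLgen β m q) (TLgen β m i),
            gen_absorb β m i q hq]
      · -- case B2 : at least two occurrences of i-1
        push_neg at hB
        obtain ⟨y, hyb, hy⟩ := hB
        have hy' : (y : ℕ) + 1 = (i : ℕ) := by
          have := hlt y (by simp [hyb]); omega
        obtain ⟨a2, q2, b2, rfl, hq2, ha2⟩ :=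
          first_split (fun z : Fin m => (z : ℕ) + 1 = (i : ℕ)) _ ⟨y, hyb, hy'⟩
        have hq2q : q2 = q := Fin.ext (by omega)
        subst hq2q
        have ha2' : ∀ j ∈ a2, (j : ℕ) < (q2 : ℕ) := by
          intro j hj
          have h1 := hlt j (by simp [hj])
          have h2 := ha2 j hj
          omega
        -- inner reduction: u_q a2 u_q
        obtain ⟨c1, w1, hw1len, hw1le, hw1eq⟩ := ih q2 a2 (by
          simp at hw ⊢; omega) ha2'
        -- new word
        have hnewlt : ∀ j ∈ a ++ w1 ++ b2, (j : ℕ) < (i : ℕ) := by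
          intro j hj
          rcases List.mem_append.mp hj with hj | hj
          · rcases List.mem_append.mp hj with hj | hj
            · exact hlt j (by simp [hj])
            · have := hw1le j hj; omega
          · exact hlt j (by simp [hj])
        have hnewlen : (a ++ w1 ++ b2).length ≤ n := by
          simp at hw ⊢; omega
        obtain ⟨c2, w2, hw2len, hw2le, hw2eq⟩ := ih i (a ++ w1 ++ b2) hnewlen hnewlt
        refine ⟨c1 * c2, w2, ?_, hw2le, ?_⟩
        · simp at hw1len hw2len ⊢; omega
        · have hmid : wordProd β m (a ++ q2 :: (a2 ++ q2 :: b2))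
              = c1 • wordProd β m (a ++ w1 ++ b2) := by
            rw [wordProd_append, wordProd_cons, wordProd_append, wordProd_cons,
              wordProd_append, wordProd_append]
            simp only [← mul_assoc]
            rw [mul_assoc (wordProd β m a) (TLgen β m q2) (wordProd β m a2),
              mul_assoc (wordProd β m a) (TLgen β m q2 * wordProd β m a2) (TLgen β m q2),
              hw1eq, mul_smul_comm, smul_mul_assoc]
          rw [hmid, mul_smul_comm, smul_mul_assoc, hw2eq, smul_smul]

/-- A word is reduced if it is not (in the algebra, i.e. using the relations and
scalar factors) a scalar multiple of a word with strictly fewer generators. -/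
def Reduced (β : ℂ) (m : ℕ) (l : List (Fin m)) : Prop :=
  ¬ ∃ (l' : List (Fin m)) (c : ℂ),
      l'.length < l.length ∧ wordProd β m l = c • wordProd β m l'

/-- In any reduced Temperley–Lieb word, the maximal index occurs exactly once. -/
theorem stmt_4 (β : ℂ) (m : ℕ) (l : List (Fin m)) (hred : Reduced β m l)
    (i : Fin m) (hi : i ∈ l) (hmax : ∀ j ∈ l, j ≤ i) :
    l.count i = 1 := by
  by_contra hct
  have hpos : 1 ≤ l.count i := List.count_pos_iff.mpr hi
  have h2 : 2 ≤ l.count i := by omega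
  -- first occurrence
  obtain ⟨a, q, b, rfl, hq, ha⟩ := first_split (fun z : Fin m => z = i) l ⟨i, hi, rfl⟩
  subst hq
  have hca : a.count q = 0 := List.count_eq_zero.mpr (fun h => ha q h rfl)
  have hib : q ∈ b := by
    have : (a ++ q :: b).count q = a.count q + (1 + b.count q) := by
      simp [List.count_cons, List.count_append]
      omega
    rw [this, hca] at h2
    have : 1 ≤ b.count q := by omega
    exact List.count_pos_iff.mp (by omega)
  obtain ⟨c, q2, d, rfl, hq2, hc⟩ := first_split (fun z : Fin m => z = q) b ⟨q, hib, rfl⟩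
  subst hq2
  have hclt : ∀ j ∈ c, (j : ℕ) < (q2 : ℕ) := by
    intro j hj
    have h1 : j ≤ q2 := hmax j (by simp [hj])
    have h2 : j ≠ q2 := fun h => hc j hj h
    exact lt_of_le_of_ne (Fin.le_iff_val_le_val.mp h1) (fun h => h2 (Fin.ext h))
  obtain ⟨c0, w', hw'len, _, hw'eq⟩ := key β m c.length q2 c le_rfl hclt
  apply hred
  refine ⟨a ++ w' ++ d, c0, ?_, ?_⟩
  · simp only [List.length_append, List.length_cons] at hw'len ⊢
    omega
  · rw [wordProd_append, wordProd_cons, wordProd_append, wordProd_cons]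
    rw [wordProd_append, wordProd_append]
    simp only [← mul_assoc]
    rw [mul_assoc (wordProd β m a) (TLgen β m q2) (wordProd β m c),
      mul_assoc (wordProd β m a) (TLgen β m q2 * wordProd β m c) (TLgen β m q2),
      hw'eq, mul_smul_comm, smul_mul_assoc]
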